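/- Suppose (θ_n)_{n≥1} is a BMM sequence with Euclidean proximal surrogates, i.e. g_n^i(θ) = f_n^i(θ) + (λ_n/2)‖θ − θ_{n−1}^i‖² for all n, i, where L_f ≤ λ_n ≤ Λ for a fixed constant Λ < ∞. Assume Σ_{n≥1} Δ_n < ∞, the sublevel set {θ ∈ Θ : f(θ) ≤ a} is compact for every a ∈ ℝ, each g_n^i attains its minimum over Θ_i at some θ_n^{i⋆} ∈ Θ_i, and ‖θ_n^{i⋆} − θ_n^i‖ → 0 as n → ∞. Then every limit point of (θ_n)_{n≥0} is a stationary point of f over Θ. -/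

import Mathlib

open Filter RealInnerProductSpace

/-- The point of the product space whose first `i-1` blocks are those of `θ n`, whose
`i`-th block is `v`, and whose remaining blocks are those of `θ (n-1)`.  Thus the `i`-th
marginal objective at cycle `n` is `fun v => f (mixPt θ n i v)`, and the Euclidean proximal
surrogate is `fun v => f (mixPt θ n i v) + (λ_n/2) ‖v - θ (n-1) i‖²`. -/
def mixPt {m : ℕ} {X : Fin m → Type*} (θ : ℕ → ∀ i, X i) (n : ℕ) (i : Fin m)
    (v : X i) : ∀ j, X j :=
  Function.update (fun j => if (j : ℕ) < (i : ℕ) then θ n j else θ (n - 1) j) i v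

/-- The `i`-th block partial gradient `∇_i f(x)`: the gradient at `x i` of the map
`u ↦ f (x with i-th block replaced by u)`. -/
noncomputable def gradi {m : ℕ} {E : Fin m → Type*} [∀ i, NormedAddCommGroup (E i)]
    [∀ i, InnerProductSpace ℝ (E i)] [∀ i, CompleteSpace (E i)]
    (f : (∀ i, E i) → ℝ) (x : ∀ i, E i) (i : Fin m) : E i :=
  gradient (fun u => f (Function.update x i u)) (x i)

open Set in
lemma aux_deriv_nonneg_of_isMinOn {φ : ℝ → ℝ} {c : ℝ} (h : HasDerivAt φ c 0)
    (hmin : ∀ t ∈ Set.Icc (0:ℝ) 1, φ 0 ≤ φ t) : 0 ≤ c := by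
  have h' : HasDerivWithinAt φ c (Set.Ioi 0) 0 := h.hasDerivWithinAt
  rw [hasDerivWithinAt_iff_tendsto_slope] at h'
  have hs : Set.Ioi (0:ℝ) \ {0} = Set.Ioi 0 := Set.diff_singleton_eq_self (by simp)
  rw [hs] at h'
  refine ge_of_tendsto h' ?_
  filter_upwards [Ioc_mem_nhdsGT_of_mem (by norm_num : (0:ℝ) ∈ Set.Ico 0 1)] with t ht
  rw [slope_def_field]
  have := hmin t ⟨le_of_lt ht.1, ht.2⟩
  have ht0 : 0 < t - 0 := by linarith [ht.1]
  exact div_nonneg (by linarith) (le_of_lt ht0)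

lemma aux_hasDerivAt_quad {F : Type*} [NormedAddCommGroup F] [InnerProductSpace ℝ F]
    (a d : F) (lam : ℝ) :
    HasDerivAt (fun t : ℝ => lam / 2 * ‖a + t • d‖ ^ 2) (lam * ⟪a, d⟫) 0 := by
  have hfe : (fun t : ℝ => lam / 2 * ‖a + t • d‖ ^ 2)
      = fun t : ℝ => lam / 2 * (‖a‖ ^ 2 + 2 * (t * ⟪a, d⟫) + t ^ 2 * ‖d‖ ^ 2) := by
    funext t
    rw [norm_add_sq_real, real_inner_smul_right, norm_smul]
    simp [mul_pow, sq_abs]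
  rw [hfe]
  have h1 : HasDerivAt (fun t : ℝ => ‖a‖ ^ 2 + 2 * (t * ⟪a, d⟫) + t ^ 2 * ‖d‖ ^ 2)
      (2 * ⟪a, d⟫) 0 := by
    have ha : HasDerivAt (fun t : ℝ => t * ⟪a, d⟫) ⟪a, d⟫ 0 := by
      simpa using (hasDerivAt_id (0:ℝ)).mul_const ⟪a, d⟫
    have hb : HasDerivAt (fun t : ℝ => t ^ 2 * ‖d‖ ^ 2) 0 0 := by
      simpa using (hasDerivAt_pow 2 (0:ℝ)).mul_const (‖d‖ ^ 2)
    exact (((ha.const_mul 2).const_add (‖a‖ ^ 2)).add hb).congr_deriv (by ring)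
  have := h1.const_mul (lam / 2)
  refine this.congr_deriv ?_
  ring

lemma aux_key {m : ℕ}
    {E : Fin m → Type*} [∀ i, NormedAddCommGroup (E i)]
    [∀ i, InnerProductSpace ℝ (E i)] [∀ i, FiniteDimensional ℝ (E i)]
    (Θ : ∀ i, Set (E i)) (hconv : ∀ i, Convex ℝ (Θ i))
    (f : (∀ i, E i) → ℝ) (hdiff : Differentiable ℝ f)
    (θ : ℕ → ∀ i, E i) (hθ : ∀ n i, θ n i ∈ Θ i)
    (lam : ℕ → ℝ)
    (θstar : ℕ → ∀ i, E i)
    (hstarmem : ∀ n, 1 ≤ n → ∀ i, θstar n i ∈ Θ i)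
    (hstarmin : ∀ n, 1 ≤ n → ∀ i, ∀ v ∈ Θ i,
      f (mixPt θ n i (θstar n i)) + lam n / 2 * ‖θstar n i - θ (n - 1) i‖ ^ 2
        ≤ f (mixPt θ n i v) + lam n / 2 * ‖v - θ (n - 1) i‖ ^ 2)
    (n : ℕ) (hn : 1 ≤ n) (i : Fin m) (u : E i) (hu : u ∈ Θ i) :
    0 ≤ ⟪gradi f (mixPt θ n i (θstar n i)) i, u - θstar n i⟫
        + lam n * ⟪θstar n i - θ (n - 1) i, u - θstar n i⟫ := by
  set s := θstar n i with hs
  set c := θ (n - 1) i with hc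
  set d := u - s with hd
  set base : ∀ j, E j := fun j => if (j : ℕ) < (i : ℕ) then θ n j else θ (n - 1) j with hbase
  set g : E i → ℝ := fun v => f (Function.update base i v) with hg
  have hmix : ∀ v, mixPt θ n i v = Function.update base i v := fun v => rfl
  have hgdiff : ∀ v, DifferentiableAt ℝ g v := fun v =>
    (hdiff _).comp v (hasFDerivAt_update base v).differentiableAt
  -- identify gradi with gradient g s
  have hGg : gradi f (mixPt θ n i s) i = gradient g s := by
    have h1 : (fun w => f (Function.update (mixPt θ n i s) i w)) = g := by
      funext w
      rw [hmix, Function.update_idem]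
    have h2 : mixPt θ n i s i = s := by
      rw [hmix]; exact Function.update_self i s base
    unfold gradi
    rw [h1, h2]
  -- derivative of the one-dimensional restriction
  have hcurve : HasDerivAt (fun t : ℝ => s + t • d) d 0 := by
    simpa using (((hasDerivAt_id (0:ℝ)).smul_const d).const_add s)
  have hpt : (fun t : ℝ => s + t • d) 0 = s := by simp
  have hfd : HasFDerivAt g ((InnerProductSpace.toDual ℝ (E i)) (gradient g s))
      ((fun t : ℝ => s + t • d) 0) := by
    rw [hpt]
    exact (hgdiff s).hasGradientAt.hasFDerivAt
  have hpart1 : HasDerivAt (fun t : ℝ => g (s + t • d)) ⟪gradient g s, d⟫ 0 := by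
    have := hfd.comp_hasDerivAt 0 hcurve
    simpa [InnerProductSpace.toDual_apply_apply, Function.comp_def] using this
  have hpart2 := aux_hasDerivAt_quad (s - c) d (lam n)
  have hφ : HasDerivAt (fun t : ℝ => g (s + t • d) + lam n / 2 * ‖s - c + t • d‖ ^ 2)
      (⟪gradient g s, d⟫ + lam n * ⟪s - c, d⟫) 0 := hpart1.add hpart2
  have hmin : ∀ t ∈ Set.Icc (0:ℝ) 1,
      g (s + (0:ℝ) • d) + lam n / 2 * ‖s - c + (0:ℝ) • d‖ ^ 2
        ≤ g (s + t • d) + lam n / 2 * ‖s - c + t • d‖ ^ 2 := by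
    intro t ht
    have hv : s + t • d ∈ Θ i := by
      have := hconv i (hstarmem n hn i) hu (a := 1 - t) (b := t)
        (by linarith [ht.2]) ht.1 (by ring)
      convert this using 1
      rw [hd]
      module
    have := hstarmin n hn i (s + t • d) hv
    have e1 : s + t • d - c = s - c + t • d := by abel
    simp only [hmix] at this ⊢
    simp only [zero_smul, add_zero]
    rw [← e1]
    exact this
  have h0 := aux_deriv_nonneg_of_isMinOn hφ hmin
  rw [hGg]
  exact h0

lemma aux_descent {m : ℕ}
    {E : Fin m → Type*} [∀ i, NormedAddCommGroup (E i)]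
    (Θ : ∀ i, Set (E i))
    (f : (∀ i, E i) → ℝ)
    (θ : ℕ → ∀ i, E i) (hθ : ∀ n i, θ n i ∈ Θ i)
    (lam : ℕ → ℝ) (Δ : ℕ → ℝ)
    (hopt : ∀ n, 1 ≤ n → ∀ i, ∀ v ∈ Θ i,
      f (mixPt θ n i (θ n i)) + lam n / 2 * ‖θ n i - θ (n - 1) i‖ ^ 2
        ≤ f (mixPt θ n i v) + lam n / 2 * ‖v - θ (n - 1) i‖ ^ 2 + Δ n)
    (n : ℕ) (hn : 1 ≤ n) :
    f (θ n) + lam n / 2 * ∑ i, ‖θ n i - θ (n - 1) i‖ ^ 2 ≤ f (θ (n - 1)) + m * Δ n := by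
  classical
  set w : ℕ → ∀ j, E j := fun k => fun j => if (j : ℕ) < k then θ n j else θ (n - 1) j with hw
  set a : ℕ → ℝ := fun k => if h : k < m then ‖θ n ⟨k, h⟩ - θ (n - 1) ⟨k, h⟩‖ ^ 2 else 0 with ha
  have hw0 : w 0 = θ (n - 1) := by
    funext j; simp [hw]
  have hwm : w m = θ n := by
    funext j; simp [hw, j.isLt]
  have hstep : ∀ k, (hk : k < m) →
      f (w (k + 1)) + lam n / 2 * a k ≤ f (w k) + Δ n := by
    intro k hk
    have h1 : mixPt θ n ⟨k, hk⟩ (θ n ⟨k, hk⟩) = w (k + 1) := by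
      funext j
      show Function.update _ _ _ j = _
      simp only [hw]
      by_cases hji : j = ⟨k, hk⟩
      · subst hji; simp
      · have hjk : (j : ℕ) ≠ k := fun h => hji (Fin.ext h)
        rw [Function.update_of_ne hji]
        by_cases h2 : (j : ℕ) < k
        · rw [if_pos h2, if_pos (by omega)]
        · rw [if_neg h2, if_neg (by omega)]
    have h2 : mixPt θ n ⟨k, hk⟩ (θ (n - 1) ⟨k, hk⟩) = w k := by
      funext j
      show Function.update _ _ _ j = _
      simp only [hw]
      by_cases hji : j = ⟨k, hk⟩
      · subst hji; simp
      · rw [Function.update_of_ne hji]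
    have := hopt n hn ⟨k, hk⟩ (θ (n - 1) ⟨k, hk⟩) (hθ (n - 1) _)
    rw [h1, h2] at this
    simp only [sub_self, norm_zero] at this
    have hak : a k = ‖θ n ⟨k, hk⟩ - θ (n - 1) ⟨k, hk⟩‖ ^ 2 := dif_pos hk
    rw [hak]
    calc f (w (k + 1)) + lam n / 2 * ‖θ n ⟨k, hk⟩ - θ (n - 1) ⟨k, hk⟩‖ ^ 2
        ≤ f (w k) + lam n / 2 * 0 ^ 2 + Δ n := this
      _ = f (w k) + Δ n := by ring
  have hind : ∀ k, k ≤ m →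
      f (w k) + lam n / 2 * ∑ j ∈ Finset.range k, a j ≤ f (θ (n - 1)) + k * Δ n := by
    intro k
    induction k with
    | zero => intro _; simp [hw0]
    | succ k ih =>
      intro hk1
      have hk : k < m := hk1
      have h1 := hstep k hk
      have h2 := ih (le_of_lt hk)
      rw [Finset.sum_range_succ]
      push_cast
      linarith
  have hfin := hind m le_rfl
  rw [hwm] at hfin
  have hsum : ∑ i : Fin m, ‖θ n i - θ (n - 1) i‖ ^ 2 = ∑ j ∈ Finset.range m, a j := by
    rw [← Fin.sum_univ_eq_sum_range]
    exact Finset.sum_congr rfl fun i _ => by simp [ha, i.isLt]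
  rw [hsum]
  exact hfin

/-- asymptotic convergence to stationary points for BMM with Euclidean
proximal surrogates `g_n^i(θ) = f_n^i(θ) + (λ_n/2)‖θ - θ_{n-1}^i‖²`, `L_f ≤ λ_n ≤ Λ`.
Under summable optimality gaps, compact sublevel sets and exact minimizers `θ_n^{i⋆}` with
`‖θ_n^{i⋆} - θ_n^i‖ → 0`, every limit point of `(θ_n)` is a stationary point of `f` over
`Θ`. -/
theorem bmm_proximal_limit_points_stationary {m : ℕ} (hm : 1 ≤ m)
    {E : Fin m → Type*} [∀ i, NormedAddCommGroup (E i)]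
    [∀ i, InnerProductSpace ℝ (E i)] [∀ i, FiniteDimensional ℝ (E i)]
    (Θ : ∀ i, Set (E i)) (hne : ∀ i, (Θ i).Nonempty)
    (hclosed : ∀ i, IsClosed (Θ i)) (hconv : ∀ i, Convex ℝ (Θ i))
    (f : (∀ i, E i) → ℝ) (Lf : ℝ) (hLf : 0 < Lf)
    (hdiff : Differentiable ℝ f)
    (hsmooth : ∀ x y : ∀ i, E i,
      Real.sqrt (∑ i, ‖gradi f x i - gradi f y i‖ ^ 2)
        ≤ Lf * Real.sqrt (∑ i, ‖x i - y i‖ ^ 2))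
    (fstar : ℝ) (hbdd : ∀ x, fstar ≤ f x)
    (θ : ℕ → ∀ i, E i) (hθ : ∀ n i, θ n i ∈ Θ i)
    (lam : ℕ → ℝ) (Λbd : ℝ) (hlam : ∀ n, 1 ≤ n → Lf ≤ lam n ∧ lam n ≤ Λbd)
    (Δ : ℕ → ℝ) (hΔ : ∀ n, 1 ≤ n → 0 ≤ Δ n)
    (hopt : ∀ n, 1 ≤ n → ∀ i, ∀ v ∈ Θ i,
      f (mixPt θ n i (θ n i)) + lam n / 2 * ‖θ n i - θ (n - 1) i‖ ^ 2
        ≤ f (mixPt θ n i v) + lam n / 2 * ‖v - θ (n - 1) i‖ ^ 2 + Δ n)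
    (hΔsum : Summable fun n => Δ (n + 1))
    (hcompact : ∀ a : ℝ, IsCompact {x : ∀ i, E i | (∀ i, x i ∈ Θ i) ∧ f x ≤ a})
    (θstar : ℕ → ∀ i, E i)
    (hstarmem : ∀ n, 1 ≤ n → ∀ i, θstar n i ∈ Θ i)
    (hstarmin : ∀ n, 1 ≤ n → ∀ i, ∀ v ∈ Θ i,
      f (mixPt θ n i (θstar n i)) + lam n / 2 * ‖θstar n i - θ (n - 1) i‖ ^ 2
        ≤ f (mixPt θ n i v) + lam n / 2 * ‖v - θ (n - 1) i‖ ^ 2)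
    (hstarclose : ∀ i, Tendsto (fun n => ‖θstar n i - θ n i‖) atTop (nhds 0)) :
    ∀ θbar : ∀ i, E i, MapClusterPt θbar atTop θ →
      (∀ i, θbar i ∈ Θ i) ∧ ∀ i, ∀ u ∈ Θ i, 0 ≤ ⟪gradi f θbar i, u - θbar i⟫ := by
  classical
  intro θbar hcl
  have hmemS : ∀ i, θbar i ∈ Θ i := by
    have hSclosed : IsClosed {x : ∀ i, E i | ∀ i, x i ∈ Θ i} := by
      have hset : {x : ∀ i, E i | ∀ i, x i ∈ Θ i} = Set.univ.pi Θ := by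
        ext x; simp [Set.mem_pi]
      rw [hset]; exact isClosed_set_pi fun i _ => hclosed i
    have hle : Filter.map θ atTop ≤ Filter.principal {x : ∀ i, E i | ∀ i, x i ∈ Θ i} := by
      rw [Filter.le_principal_iff, Filter.mem_map]
      exact Filter.univ_mem' fun n => fun i => hθ n i
    have hcp := hcl.clusterPt.mono hle
    have hmem := mem_closure_iff_clusterPt.2 hcp
    rwa [hSclosed.closure_eq] at hmem
  refine ⟨hmemS, ?_⟩
  -- step norms tend to zero
  set D : ℕ → ℝ := fun n => ∑ i, ‖θ (n + 1) i - θ n i‖ ^ 2 with hD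
  have hDnonneg : ∀ n, 0 ≤ D n := fun n => Finset.sum_nonneg fun i _ => sq_nonneg _
  have hΔnn : ∀ n : ℕ, 0 ≤ Δ (n + 1) := fun n => hΔ (n + 1) (by omega)
  have hDle : ∀ n : ℕ, Lf / 2 * D n ≤ f (θ n) - f (θ (n + 1)) + m * Δ (n + 1) := by
    intro n
    have hdesc := aux_descent Θ f θ hθ lam Δ hopt (n + 1) (by omega)
    simp only [Nat.add_sub_cancel] at hdesc
    have hlam1 := (hlam (n + 1) (by omega)).1
    have hmono : Lf / 2 * D n ≤ lam (n + 1) / 2 * D n :=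
      mul_le_mul_of_nonneg_right (by linarith) (hDnonneg n)
    rw [hD]
    linarith
  have hDsummable : Summable D := by
    apply summable_of_sum_range_le hDnonneg (c := (f (θ 0) - fstar + m * ∑' n, Δ (n + 1)) / (Lf / 2))
    intro N
    have h1 : ∑ n ∈ Finset.range N, (Lf / 2 * D n)
        ≤ (f (θ 0) - f (θ N)) + m * ∑ n ∈ Finset.range N, Δ (n + 1) := by
      calc ∑ n ∈ Finset.range N, (Lf / 2 * D n)
          ≤ ∑ n ∈ Finset.range N, (f (θ n) - f (θ (n + 1)) + m * Δ (n + 1)) :=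
            Finset.sum_le_sum fun n _ => hDle n
        _ = (f (θ 0) - f (θ N)) + m * ∑ n ∈ Finset.range N, Δ (n + 1) := by
            rw [Finset.sum_add_distrib, Finset.sum_range_sub', ← Finset.mul_sum]
    have h2 : ∑ n ∈ Finset.range N, Δ (n + 1) ≤ ∑' n, Δ (n + 1) :=
      hΔsum.sum_le_tsum _ (fun n _ => hΔnn n)
    have hmnn : (0:ℝ) ≤ (m : ℝ) := Nat.cast_nonneg m
    have h3 : Lf / 2 * ∑ n ∈ Finset.range N, D n ≤ f (θ 0) - fstar + m * ∑' n, Δ (n + 1) := by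
      rw [Finset.mul_sum]
      have hb := hbdd (θ N)
      nlinarith
    have hLf2 : 0 < Lf / 2 := by linarith
    exact (le_div_iff₀' hLf2).mpr h3
  have hD0 : Tendsto D atTop (nhds 0) := hDsummable.tendsto_atTop_zero
  have hstepnorm : ∀ i, Tendsto (fun n => ‖θ n i - θ (n - 1) i‖) atTop (nhds 0) := by
    intro i
    have h1 : Tendsto (fun n => ‖θ (n + 1) i - θ n i‖ ^ 2) atTop (nhds 0) := by
      refine squeeze_zero (fun n => sq_nonneg _) (fun n => ?_) hD0
      exact Finset.single_le_sum (f := fun j => ‖θ (n + 1) j - θ n j‖ ^ 2)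
        (fun j _ => sq_nonneg _) (Finset.mem_univ i)
    have h2 : Tendsto (fun n => ‖θ (n + 1) i - θ n i‖) atTop (nhds 0) := by
      have hs := (Real.continuous_sqrt.tendsto 0).comp h1
      rw [Real.sqrt_zero] at hs
      exact hs.congr fun n => Real.sqrt_sq (norm_nonneg _)
    exact (tendsto_add_atTop_iff_nat 1).1 (h2.congr fun n => by simp)
  -- subsequence
  obtain ⟨ψ, hψmono, hψtend⟩ := TopologicalSpace.FirstCountableTopology.tendsto_subseq hcl
  have hψtop : Tendsto ψ atTop atTop := hψmono.tendsto_atTop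
  intro i u hu
  have hθi : ∀ j, Tendsto (fun k => θ (ψ k) j) atTop (nhds (θbar j)) := fun j =>
    ((continuous_apply j).tendsto θbar).comp hψtend
  have hdiffψ : ∀ j, Tendsto (fun k => θ (ψ k) j - θ (ψ k - 1) j) atTop (nhds 0) := by
    intro j
    rw [tendsto_zero_iff_norm_tendsto_zero]
    exact (hstepnorm j).comp hψtop
  have hprev : ∀ j, Tendsto (fun k => θ (ψ k - 1) j) atTop (nhds (θbar j)) := by
    intro j
    have hsub := (hθi j).sub (hdiffψ j)
    rw [sub_zero] at hsub
    exact hsub.congr fun k => sub_sub_cancel _ _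
  have hstarψ : Tendsto (fun k => θstar (ψ k) i) atTop (nhds (θbar i)) := by
    have h0 : Tendsto (fun k => θstar (ψ k) i - θ (ψ k) i) atTop (nhds 0) := by
      rw [tendsto_zero_iff_norm_tendsto_zero]
      exact (hstarclose i).comp hψtop
    have hadd := h0.add (hθi i)
    rw [zero_add] at hadd
    exact hadd.congr fun k => by abel
  set x : ℕ → ∀ j, E j := fun k => mixPt θ (ψ k) i (θstar (ψ k) i) with hx
  have hxlim : Tendsto x atTop (nhds θbar) := by
    rw [tendsto_pi_nhds]
    intro j
    by_cases hji : j = i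
    · subst hji
      exact hstarψ.congr fun k => (Function.update_self _ _ _).symm
    · have hupd : ∀ k, x k j = if (j : ℕ) < (i : ℕ) then θ (ψ k) j else θ (ψ k - 1) j :=
        fun k => Function.update_of_ne hji _ _
      by_cases h2 : (j : ℕ) < (i : ℕ)
      · exact (hθi j).congr fun k => by rw [hupd k, if_pos h2]
      · exact (hprev j).congr fun k => by rw [hupd k, if_neg h2]
  have hgradlim : Tendsto (fun k => gradi f (x k) i) atTop (nhds (gradi f θbar i)) := by
    rw [tendsto_iff_norm_sub_tendsto_zero]
    have hb : Tendsto (fun k => Lf * Real.sqrt (∑ j, ‖x k j - θbar j‖ ^ 2)) atTop (nhds 0) := by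
      have hsum : Tendsto (fun k => ∑ j, ‖x k j - θbar j‖ ^ 2) atTop (nhds 0) := by
        have hco : ∀ j : Fin m, Tendsto (fun k => ‖x k j - θbar j‖ ^ 2) atTop (nhds 0) := by
          intro j
          have hj : Tendsto (fun k => x k j - θbar j) atTop (nhds 0) := by
            have hxj := ((continuous_apply j).tendsto θbar).comp hxlim
            have := hxj.sub (tendsto_const_nhds (x := θbar j))
            rwa [sub_self] at this
          have hn := hj.norm
          rw [norm_zero] at hn
          simpa using hn.pow 2
        simpa using tendsto_finset_sum Finset.univ fun j _ => hco j
      have hs := (Real.continuous_sqrt.tendsto 0).comp hsum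
      rw [Real.sqrt_zero] at hs
      simpa using hs.const_mul Lf
    refine squeeze_zero (fun k => norm_nonneg _) (fun k => ?_) hb
    have h1 : ‖gradi f (x k) i - gradi f θbar i‖
        ≤ Real.sqrt (∑ j, ‖gradi f (x k) j - gradi f θbar j‖ ^ 2) := by
      rw [← Real.sqrt_sq (norm_nonneg (gradi f (x k) i - gradi f θbar i))]
      exact Real.sqrt_le_sqrt (Finset.single_le_sum
        (f := fun j => ‖gradi f (x k) j - gradi f θbar j‖ ^ 2)
        (fun j _ => sq_nonneg _) (Finset.mem_univ i))
    exact h1.trans (hsmooth (x k) θbar)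
  have hψ1 : ∀ᶠ k in atTop, 1 ≤ ψ k := hψtop.eventually_ge_atTop 1
  set T : ℕ → ℝ := fun k => ⟪gradi f (x k) i, u - θstar (ψ k) i⟫
      + lam (ψ k) * ⟪θstar (ψ k) i - θ (ψ k - 1) i, u - θstar (ψ k) i⟫ with hT
  have hTnn : ∀ᶠ k in atTop, 0 ≤ T k := by
    filter_upwards [hψ1] with k hk
    exact aux_key Θ hconv f hdiff θ hθ lam θstar hstarmem hstarmin (ψ k) hk i u hu
  have hT1 : Tendsto (fun k => ⟪gradi f (x k) i, u - θstar (ψ k) i⟫) atTop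
      (nhds ⟪gradi f θbar i, u - θbar i⟫) :=
    hgradlim.inner (tendsto_const_nhds.sub hstarψ)
  have hc : Tendsto (fun k => ⟪θstar (ψ k) i - θ (ψ k - 1) i, u - θstar (ψ k) i⟫) atTop
      (nhds 0) := by
    have ha : Tendsto (fun k => θstar (ψ k) i - θ (ψ k - 1) i) atTop (nhds 0) := by
      have := hstarψ.sub (hprev i)
      rwa [sub_self] at this
    have := Filter.Tendsto.inner (𝕜 := ℝ) ha ((tendsto_const_nhds (x := u)).sub hstarψ)
    simpa using this
  have hT2 : Tendsto (fun k => lam (ψ k)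
      * ⟪θstar (ψ k) i - θ (ψ k - 1) i, u - θstar (ψ k) i⟫) atTop (nhds 0) := by
    have hbnd := hc.norm.const_mul Λbd
    rw [norm_zero, mul_zero] at hbnd
    refine squeeze_zero_norm' ?_ hbnd
    filter_upwards [hψ1] with k hk
    have h1 := (hlam (ψ k) hk).1
    have h2 := (hlam (ψ k) hk).2
    rw [norm_mul]
    have hl : ‖lam (ψ k)‖ ≤ Λbd := by
      rw [Real.norm_eq_abs, abs_of_pos (lt_of_lt_of_le hLf h1)]; exact h2
    exact mul_le_mul_of_nonneg_right hl (norm_nonneg _)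
  have hTlim : Tendsto T atTop (nhds ⟪gradi f θbar i, u - θbar i⟫) := by
    have := hT1.add hT2
    rwa [add_zero] at this
  exact ge_of_tendsto hTlim hTnn
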